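/- Let S ⊆ ℝ² be a compact set and let r > 0. Then vol(cthickening(r, S)) ≥ 2·r·λ₁(π₁(S)), where π₁(S) = {x : (x, y) ∈ S for some y} is the projection of S onto the first coordinate and λ₁ denotes one-dimensional Lebesgue measure. -/

import Mathlib

open MeasureTheory Metric Set ENNReal

noncomputable section

/-- The plane `ℝ²` with the Euclidean metric. -/
abbrev Plane := EuclideanSpace ℝ (Fin 2)

/-- **Slicing estimate.** For a compact `S ⊆ ℝ²` and `r > 0`, the area of the closed
`r`-thickening of `S` is at least `2r` times the one-dimensional Lebesgue measure of the
projection of `S` onto the first coordinate. -/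
theorem thickening_volume_ge_proj (S : Set Plane) (hS : IsCompact S) (r : ℝ) (hr : 0 < r) :
    ENNReal.ofReal (2 * r) * volume ((fun x : Plane => x 0) '' S) ≤
      volume (Metric.cthickening r S) := by
  set f : Plane → ℝ × ℝ := fun p => (p 0, p 1) with hfdef
  have hfc : Continuous f := by
    exact ((PiLp.continuous_apply (p := 2) (β := fun _ : Fin 2 => ℝ) (0 : Fin 2)).prodMk (PiLp.continuous_apply (p := 2) (β := fun _ : Fin 2 => ℝ) (1 : Fin 2)))
  have hfm : MeasurePreserving f volume volume :=
    (volume_preserving_finTwoArrow ℝ).comp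
      (EuclideanSpace.volume_preserving_symm_measurableEquiv_toLp (Fin 2))
  have hinj : Function.Injective f := by
    intro p q h
    simp only [hfdef, Prod.mk.injEq] at h
    ext i
    fin_cases i
    · exact h.1
    · exact h.2
  have hT : IsCompact (cthickening r S) := hS.cthickening
  set B : Set (ℝ × ℝ) := f '' cthickening r S with hBdef
  have hBc : IsCompact B := hT.image hfc
  have key : volume (cthickening r S) = volume B := by
    rw [← hfm.measure_preimage hBc.measurableSet.nullMeasurableSet,
      Set.preimage_image_eq _ hinj]
  set A : Set ℝ := (fun x : Plane => x 0) '' S with hAdef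
  have hAm : MeasurableSet A :=
    (hS.image (PiLp.continuous_apply (p := 2) (β := fun _ : Fin 2 => ℝ) (0 : Fin 2))).measurableSet
  rw [key, Measure.volume_eq_prod, Measure.prod_apply hBc.measurableSet]
  calc ENNReal.ofReal (2 * r) * volume A
      = ∫⁻ _ in A, ENNReal.ofReal (2 * r) := by
        rw [setLIntegral_const, mul_comm]
    _ ≤ ∫⁻ x in A, volume (Prod.mk x ⁻¹' B) := by
        refine setLIntegral_mono' hAm fun x hx => ?_
        obtain ⟨p, hpS, hpx⟩ := hx
        have hsub : Icc (p 1 - r) (p 1 + r) ⊆ Prod.mk x ⁻¹' B := by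
          intro t ht
          set q : Plane := !₂[x, t] with hq
          have h0 : q 0 = x := rfl
          have h1 : q 1 = t := rfl
          refine ⟨q, ?_, ?_⟩
          · refine mem_cthickening_of_dist_le q p r S hpS ?_
            have hd : dist q p = Real.sqrt ((q 0 - p 0) ^ 2 + (q 1 - p 1) ^ 2) := by
              rw [EuclideanSpace.dist_eq, Fin.sum_univ_two]
              simp [Real.dist_eq, sq_abs]
            have hpx' : p 0 = x := hpx
            rw [hd, h0, h1, ← hpx', sub_self]
            rw [zero_pow two_ne_zero, zero_add, Real.sqrt_sq_eq_abs, abs_le]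
            constructor <;> [linarith [ht.1]; linarith [ht.2]]
          · simp [hfdef, h0, h1]
        calc ENNReal.ofReal (2 * r)
            = volume (Icc (p 1 - r) (p 1 + r)) := by
              rw [Real.volume_Icc]; ring_nf
          _ ≤ volume (Prod.mk x ⁻¹' B) := measure_mono hsub
    _ ≤ ∫⁻ x, volume (Prod.mk x ⁻¹' B) := setLIntegral_le_lintegral _ _

end
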